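/- arXiv:2509.20345 — 3 statements merged into one kernel-verified Lean document; each statement's English description precedes it below -/
import Mathlib

section
/- Fix α, ε > 0 and suppose the family of algorithms 𝒜 satisfies the level-β risk guarantee for both β = α and β = α + ε, and that the action space, loss and algorithms satisfy the ordering conditions (existence of meets, boundedness of ℓ by c, monotonicity of ℓ, monotonicity of 𝒜 in the level). Then for every P, Q ∈ 𝒫 and all n, N ∈ ℕ, the GESPI procedure Ã(D_n, D̃_N) = 𝒜_α(D_n ∪ D̃_N) ∧ 𝒜_{α+ε}(D_n) satisfies E_{D_n ∼ Pⁿ, D̃_N ∼ Q^N, V ∼ T(P)}[ℓ(Ã(D_n, D̃_N), V)] ≤ α + min{ε, c · d_ℓ(P, Q)}, where d_ℓ(P, Q) denotes the total variation distance between the law of ℓ(𝒜_α(D_n ∪ D̃_N), V) when D_n ∼ Pⁿ, D̃_N ∼ Q^N, V ∼ T(P) (all independent) and the law of the same random variable when D_n ∼ Qⁿ, D̃_N ∼ Q^N, V ∼ T(Q). -/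
open MeasureTheory

/-- Total variation distance between two measures:
`d_TV(μ, ν) = sup over measurable sets s of |μ(s) − ν(s)|`. -/
noncomputable def tvDist {Ω : Type*} [MeasurableSpace Ω] (μ ν : Measure Ω) : ℝ :=
  ⨆ s : { s : Set Ω // MeasurableSet s }, |(μ s.1).toReal - (ν s.1).toReal|

section Aux

variable {Ω : Type*} [MeasurableSpace Ω]

lemma tvDist_bddAbove (μ ν : Measure Ω) [IsProbabilityMeasure μ] [IsProbabilityMeasure ν] :
    BddAbove (Set.range fun s : { s : Set Ω // MeasurableSet s } =>
      |(μ s.1).toReal - (ν s.1).toReal|) := by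
  refine ⟨1, ?_⟩
  rintro x ⟨s, rfl⟩
  have hμ : (μ s.1).toReal ≤ 1 := by
    have h := ENNReal.toReal_mono (measure_ne_top μ Set.univ)
      (measure_mono (Set.subset_univ s.1))
    simpa [measure_univ] using h
  have hν : (ν s.1).toReal ≤ 1 := by
    have h := ENNReal.toReal_mono (measure_ne_top ν Set.univ)
      (measure_mono (Set.subset_univ s.1))
    simpa [measure_univ] using h
  have h0μ : (0:ℝ) ≤ (μ s.1).toReal := ENNReal.toReal_nonneg
  have h0ν : (0:ℝ) ≤ (ν s.1).toReal := ENNReal.toReal_nonneg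
  rw [abs_sub_le_iff]
  constructor <;> linarith

lemma abs_sub_le_tvDist (μ ν : Measure Ω) [IsProbabilityMeasure μ] [IsProbabilityMeasure ν]
    {s : Set Ω} (hs : MeasurableSet s) :
    |(μ s).toReal - (ν s).toReal| ≤ tvDist μ ν :=
  le_ciSup (tvDist_bddAbove μ ν) ⟨s, hs⟩

lemma tvDist_nonneg (μ ν : Measure Ω) [IsProbabilityMeasure μ] [IsProbabilityMeasure ν] :
    0 ≤ tvDist μ ν :=
  (abs_nonneg _).trans (abs_sub_le_tvDist μ ν MeasurableSet.empty)

lemma integrable_of_le_const (μ : Measure Ω) [IsFiniteMeasure μ] {f : Ω → ℝ}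
    (hf : AEStronglyMeasurable f μ) (c : ℝ) (h : ∀ x, ‖f x‖ ≤ c) : Integrable f μ :=
  (integrable_const c).mono' hf (Filter.Eventually.of_forall h)

lemma integral_le_integral_add_tv (μ ν : Measure Ω)
    [IsProbabilityMeasure μ] [IsProbabilityMeasure ν]
    {f : Ω → ℝ} (hf : Measurable f) {c : ℝ} (hc : 0 < c)
    (h0 : ∀ x, 0 ≤ f x) (h1 : ∀ x, f x ≤ c) :
    ∫ x, f x ∂μ ≤ ∫ x, f x ∂ν + c * tvDist (μ.map f) (ν.map f) := by
  haveI : IsProbabilityMeasure (μ.map f) := Measure.isProbabilityMeasure_map hf.aemeasurable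
  haveI : IsProbabilityMeasure (ν.map f) := Measure.isProbabilityMeasure_map hf.aemeasurable
  set d := tvDist (μ.map f) (ν.map f) with hd
  have hd0 : 0 ≤ d := tvDist_nonneg _ _
  set G : Measure Ω → ℝ → ℝ := fun κ t => (κ.map f (Set.Ioi t)).toReal with hG
  have hmapset : ∀ (κ : Measure Ω) (t : ℝ), κ.map f (Set.Ioi t) = κ {a | t < f a} := by
    intro κ t
    rw [Measure.map_apply hf measurableSet_Ioi]
    rfl
  have hnorm : ∀ x, ‖f x‖ ≤ c := fun x => by
    rw [Real.norm_eq_abs, abs_of_nonneg (h0 x)]; exact h1 x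
  have hlayer : ∀ (κ : Measure Ω), IsProbabilityMeasure κ →
      ∫ x, f x ∂κ = ∫ t in Set.Ioi (0:ℝ), G κ t := by
    intro κ hκ
    have hint : Integrable f κ := integrable_of_le_const κ hf.aestronglyMeasurable c hnorm
    rw [hint.integral_eq_integral_meas_lt (Filter.Eventually.of_forall h0)]
    refine setIntegral_congr_fun measurableSet_Ioi fun t _ => ?_
    rw [hG]; simp only []; rw [hmapset, measureReal_def]
  have hGanti : ∀ κ : Measure Ω, IsProbabilityMeasure (κ.map f) → Antitone (G κ) := by
    intro κ hκ s t hst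
    exact ENNReal.toReal_mono (measure_ne_top _ _) (measure_mono (Set.Ioi_subset_Ioi hst))
  have hGmeas : ∀ κ : Measure Ω, IsProbabilityMeasure (κ.map f) → Measurable (G κ) :=
    fun κ hκ => (hGanti κ hκ).measurable
  have hGzero : ∀ (κ : Measure Ω) (t : ℝ), c ≤ t → G κ t = 0 := by
    intro κ t hct
    have hs : {a | t < f a} = (∅ : Set Ω) := by
      ext a
      simp only [Set.mem_setOf_eq, Set.mem_empty_iff_false, iff_false, not_lt]
      exact (h1 a).trans hct
    have : κ.map f (Set.Ioi t) = 0 := by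
      rw [hmapset, hs, measure_empty]
    simp [hG, this]
  have hGbd : ∀ (κ : Measure Ω), IsProbabilityMeasure (κ.map f) → ∀ t, G κ t ≤ 1 := by
    intro κ hκ t
    have h := ENNReal.toReal_mono (measure_ne_top (κ.map f) Set.univ)
      (measure_mono (Set.subset_univ (Set.Ioi t)))
    simpa [measure_univ] using h
  have hIocfin : (volume.restrict (Set.Ioi (0:ℝ))) (Set.Ioc 0 c) < ⊤ := by
    refine lt_of_le_of_lt (Measure.restrict_apply_le _ _) ?_
    rw [Real.volume_Ioc]
    exact ENNReal.ofReal_lt_top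
  have hindint : ∀ e : ℝ, Integrable (Set.indicator (Set.Ioc (0:ℝ) c) fun _ => e)
      (volume.restrict (Set.Ioi (0:ℝ))) := by
    intro e
    rw [integrable_indicator_iff measurableSet_Ioc]
    exact integrableOn_const hIocfin.ne
  have hGint : ∀ (κ : Measure Ω), IsProbabilityMeasure (κ.map f) →
      Integrable (G κ) (volume.restrict (Set.Ioi (0:ℝ))) := by
    intro κ hκ
    refine (hindint 1).mono' ((hGmeas κ hκ).aestronglyMeasurable) ?_
    filter_upwards [ae_restrict_mem measurableSet_Ioi] with t ht
    by_cases htc : t ≤ c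
    · rw [Set.indicator_of_mem (Set.mem_Ioc.2 ⟨ht, htc⟩)]
      rw [Real.norm_eq_abs, abs_of_nonneg ENNReal.toReal_nonneg]
      exact hGbd κ hκ t
    · rw [hGzero κ t (not_le.1 htc).le, Set.indicator_of_notMem (fun hm => htc hm.2)]
      simp
  calc ∫ x, f x ∂μ = ∫ t in Set.Ioi (0:ℝ), G μ t := hlayer μ ‹_›
    _ ≤ ∫ t in Set.Ioi (0:ℝ),
          (G ν t + Set.indicator (Set.Ioc (0:ℝ) c) (fun _ => d) t) := by
        refine integral_mono_ae (hGint μ ‹_›) ((hGint ν ‹_›).add (hindint d)) ?_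
        filter_upwards [ae_restrict_mem measurableSet_Ioi] with t ht
        by_cases htc : t ≤ c
        · rw [Set.indicator_of_mem (Set.mem_Ioc.2 ⟨ht, htc⟩)]
          have habs := abs_sub_le_tvDist (μ.map f) (ν.map f) (measurableSet_Ioi (a := t))
          have h2 := (abs_le.1 habs).2
          simp only [hG]
          linarith
        · rw [hGzero μ t (not_le.1 htc).le,
            Set.indicator_of_notMem (fun hm => htc hm.2)]
          have : 0 ≤ G ν t := ENNReal.toReal_nonneg
          linarith
    _ = (∫ t in Set.Ioi (0:ℝ), G ν t)
        + ∫ t in Set.Ioi (0:ℝ), Set.indicator (Set.Ioc (0:ℝ) c) (fun _ => d) t :=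
        integral_add (hGint ν ‹_›) (hindint d)
    _ = ∫ x, f x ∂ν + c * d := by
        rw [← hlayer ν ‹_›]
        congr 1
        rw [integral_indicator measurableSet_Ioc, setIntegral_const,
          measureReal_restrict_apply measurableSet_Ioc,
          Set.inter_eq_left.2 (fun x hx => hx.1), measureReal_def, Real.volume_Ioc]
        simp only [sub_zero, smul_eq_mul]
        rw [ENNReal.toReal_ofReal hc.le]

end Aux

lemma fin_append_eq_comp (n N : ℕ) (Z : Type*) [MeasurableSpace Z] :
    (fun p : (Fin n → Z) × (Fin N → Z) => Fin.append p.1 p.2) =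
      (MeasurableEquiv.piCongrLeft (fun _ : Fin (n + N) => Z) finSumFinEquiv) ∘
        (MeasurableEquiv.sumPiEquivProdPi (fun _ : Fin n ⊕ Fin N => Z)).symm := by
  funext p
  obtain ⟨a, b⟩ := p
  funext j
  simp only [Function.comp_apply, MeasurableEquiv.coe_piCongrLeft,
    MeasurableEquiv.coe_sumPiEquivProdPi_symm]
  refine Fin.addCases (fun i => ?_) (fun i => ?_) j
  · rw [Fin.append_left, ← finSumFinEquiv_apply_left i]
    exact (Equiv.piCongrLeft_sumInl (fun _ => Z) finSumFinEquiv a b i).symm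
  · rw [Fin.append_right, ← finSumFinEquiv_apply_right i]
    exact (Equiv.piCongrLeft_sumInr (fun _ => Z) finSumFinEquiv a b i).symm

/-- **GESPI risk bound (Theorem 1 / `thm:main`).**

Given an action space `A` with binary meets, a loss `ℓ` bounded by `c` and
monotone in the action, a family of algorithms `Alg β` monotone in the level,
satisfying the level-`β` risk guarantee for `β = α` and `β = α + ε`, the
GESPI procedure `Alg α (Dₙ ∪ D̃_N) ⊓ Alg (α+ε) Dₙ` has risk at most
`α + min {ε, c · d_ℓ(P, Q)}` for all `P, Q ∈ Pfam` and all sample sizes. -/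
theorem gespi_one_sided_risk_bound
    {Z V A : Type*} [MeasurableSpace Z] [MeasurableSpace V] [MeasurableSpace A]
    [SemilatticeInf A]
    (ℓ : A → V → ℝ) (c : ℝ) (hc : 0 < c)
    (hℓ_meas : Measurable fun p : A × V => ℓ p.1 p.2)
    (hℓ_nonneg : ∀ a v, 0 ≤ ℓ a v) (hℓ_bdd : ∀ a v, ℓ a v ≤ c)
    (hℓ_mono : ∀ a₁ a₂, a₁ ≤ a₂ → ∀ v, ℓ a₁ v ≤ ℓ a₂ v)
    (Pfam : Set (Measure Z)) (hPfam : ∀ P ∈ Pfam, IsProbabilityMeasure P)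
    (T : Measure Z → Measure V) (hT : ∀ P ∈ Pfam, IsProbabilityMeasure (T P))
    (Alg : ℝ → ∀ m : ℕ, (Fin m → Z) → A)
    (hAlg_meas : ∀ β m, Measurable (Alg β m))
    (hAlg_mono : ∀ β₁ β₂, β₁ ≤ β₂ → ∀ (m : ℕ) (z : Fin m → Z), Alg β₁ m z ≤ Alg β₂ m z)
    (α ε : ℝ) (hα : 0 < α) (hε : 0 < ε)
    (hGuar : ∀ β, (β = α ∨ β = α + ε) → ∀ P ∈ Pfam, ∀ m : ℕ,
      ∫ w : (Fin m → Z) × V, ℓ (Alg β m w.1) w.2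
        ∂((Measure.pi fun _ : Fin m => P).prod (T P)) ≤ β) :
    ∀ P ∈ Pfam, ∀ Q ∈ Pfam, ∀ n N : ℕ,
      ∫ w : (Fin n → Z) × (Fin N → Z) × V,
          ℓ (Alg α (n + N) (Fin.append w.1 w.2.1) ⊓ Alg (α + ε) n w.1) w.2.2
        ∂((Measure.pi fun _ : Fin n => P).prod
            ((Measure.pi fun _ : Fin N => Q).prod (T P)))
      ≤ α + min ε (c * tvDist
          (Measure.map (fun w : (Fin n → Z) × (Fin N → Z) × V =>
              ℓ (Alg α (n + N) (Fin.append w.1 w.2.1)) w.2.2)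
            ((Measure.pi fun _ : Fin n => P).prod
              ((Measure.pi fun _ : Fin N => Q).prod (T P))))
          (Measure.map (fun w : (Fin n → Z) × (Fin N → Z) × V =>
              ℓ (Alg α (n + N) (Fin.append w.1 w.2.1)) w.2.2)
            ((Measure.pi fun _ : Fin n => Q).prod
              ((Measure.pi fun _ : Fin N => Q).prod (T Q))))) := by
  intro P hP Q hQ n N
  haveI hPprob := hPfam P hP
  haveI hQprob := hPfam Q hQ
  haveI hTP := hT P hP
  haveI hTQ := hT Q hQ
  set μP : Measure ((Fin n → Z) × (Fin N → Z) × V) :=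
    (Measure.pi fun _ : Fin n => P).prod
      ((Measure.pi fun _ : Fin N => Q).prod (T P)) with hμP
  set μQ : Measure ((Fin n → Z) × (Fin N → Z) × V) :=
    (Measure.pi fun _ : Fin n => Q).prod
      ((Measure.pi fun _ : Fin N => Q).prod (T Q)) with hμQ
  haveI : IsProbabilityMeasure μP := by rw [hμP]; infer_instance
  haveI : IsProbabilityMeasure μQ := by rw [hμQ]; infer_instance
  set fX : (Fin n → Z) × (Fin N → Z) × V → ℝ :=
    fun w => ℓ (Alg α (n + N) (Fin.append w.1 w.2.1)) w.2.2 with hfXdef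
  set gG : (Fin n → Z) × (Fin N → Z) × V → ℝ :=
    fun w => ℓ (Alg α (n + N) (Fin.append w.1 w.2.1) ⊓ Alg (α + ε) n w.1) w.2.2 with hgGdef
  have hnorm : ∀ (a : A) (v : V), ‖ℓ a v‖ ≤ c := fun a v => by
    rw [Real.norm_eq_abs, abs_of_nonneg (hℓ_nonneg a v)]; exact hℓ_bdd a v
  have happ2 : Measurable (fun p : (Fin n → Z) × (Fin N → Z) => Fin.append p.1 p.2) := by
    rw [fin_append_eq_comp]
    exact (MeasurableEquiv.measurable _).comp (MeasurableEquiv.measurable _)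
  have happ : Measurable (fun w : (Fin n → Z) × (Fin N → Z) × V => Fin.append w.1 w.2.1) :=
    happ2.comp (measurable_fst.prodMk (measurable_snd.fst))
  have hfX : Measurable fX :=
    hℓ_meas.comp (((hAlg_meas α (n + N)).comp happ).prodMk measurable_snd.snd)
  haveI : IsProbabilityMeasure (μP.map fX) := Measure.isProbabilityMeasure_map hfX.aemeasurable
  haveI : IsProbabilityMeasure (μQ.map fX) := Measure.isProbabilityMeasure_map hfX.aemeasurable
  have hd0 : 0 ≤ tvDist (μP.map fX) (μQ.map fX) := tvDist_nonneg _ _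
  have hb1 : ∫ w, gG w ∂μP ≤ α + ε := by
    by_cases hi : Integrable gG μP
    · have hhYmeas : Measurable (fun w : (Fin n → Z) × (Fin N → Z) × V =>
          ℓ (Alg (α + ε) n w.1) w.2.2) :=
        hℓ_meas.comp (((hAlg_meas (α + ε) n).comp measurable_fst).prodMk measurable_snd.snd)
      have hle : ∫ w, gG w ∂μP ≤ ∫ w, ℓ (Alg (α + ε) n w.1) w.2.2 ∂μP := by
        refine integral_mono hi
          (integrable_of_le_const μP hhYmeas.aestronglyMeasurable c fun w => hnorm _ _)
          fun w => hℓ_mono _ _ inf_le_right _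
      have hφ : Measurable (fun w : (Fin n → Z) × (Fin N → Z) × V => (w.1, w.2.2)) :=
        measurable_fst.prodMk measurable_snd.snd
      have hmap : Measure.map (fun w : (Fin n → Z) × (Fin N → Z) × V => (w.1, w.2.2)) μP
          = (Measure.pi fun _ : Fin n => P).prod (T P) := by
        have he : (fun w : (Fin n → Z) × (Fin N → Z) × V => (w.1, w.2.2))
            = Prod.map (id : (Fin n → Z) → (Fin n → Z)) (Prod.snd : (Fin N → Z) × V → V) := rfl
        rw [hμP, he, ← Measure.map_prod_map _ _ measurable_id measurable_snd,
          Measure.map_id, Measure.map_snd_prod, measure_univ, one_smul]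
      have hH : Measurable (fun p : (Fin n → Z) × V => ℓ (Alg (α + ε) n p.1) p.2) :=
        hℓ_meas.comp (((hAlg_meas (α + ε) n).comp measurable_fst).prodMk measurable_snd)
      have heq : ∫ w, ℓ (Alg (α + ε) n w.1) w.2.2 ∂μP
          = ∫ p : (Fin n → Z) × V, ℓ (Alg (α + ε) n p.1) p.2
              ∂((Measure.pi fun _ : Fin n => P).prod (T P)) := by
        rw [← hmap, integral_map hφ.aemeasurable hH.aestronglyMeasurable]
      rw [heq] at hle
      exact hle.trans (hGuar (α + ε) (Or.inr rfl) P hP n)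
    · rw [integral_undef hi]
      positivity
  have hb2 : ∫ w, gG w ∂μP ≤ α + c * tvDist (μP.map fX) (μQ.map fX) := by
    by_cases hi : Integrable gG μP
    · have hle1 : ∫ w, gG w ∂μP ≤ ∫ w, fX w ∂μP :=
        integral_mono hi
          (integrable_of_le_const μP hfX.aestronglyMeasurable c fun w => hnorm _ _)
          fun w => hℓ_mono _ _ inf_le_left _
      have hle2 : ∫ w, fX w ∂μP ≤ ∫ w, fX w ∂μQ + c * tvDist (μP.map fX) (μQ.map fX) :=
        integral_le_integral_add_tv μP μQ hfX hc (fun w => hℓ_nonneg _ _)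
          (fun w => hℓ_bdd _ _)
      have hle3 : ∫ w, fX w ∂μQ ≤ α := by
        have happMP : MeasurePreserving
            (fun p : (Fin n → Z) × (Fin N → Z) => Fin.append p.1 p.2)
            ((Measure.pi fun _ : Fin n => Q).prod (Measure.pi fun _ : Fin N => Q))
            (Measure.pi fun _ : Fin (n + N) => Q) := by
          rw [fin_append_eq_comp]
          exact (measurePreserving_piCongrLeft (fun _ : Fin (n + N) => Q) finSumFinEquiv).comp
            (measurePreserving_sumPiEquivProdPi_symm (fun _ : Fin n ⊕ Fin N => Q))
        have hψMP : MeasurePreserving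
            (fun w : (Fin n → Z) × (Fin N → Z) × V => (Fin.append w.1 w.2.1, w.2.2)) μQ
            ((Measure.pi fun _ : Fin (n + N) => Q).prod (T Q)) := by
          have h1 := (MeasureTheory.measurePreserving_prodAssoc
            (Measure.pi fun _ : Fin n => Q) (Measure.pi fun _ : Fin N => Q) (T Q)).symm
            MeasurableEquiv.prodAssoc
          have h2 := happMP.prod (MeasurePreserving.id (T Q))
          have h3 := h2.comp h1
          rw [hμQ]
          exact h3
        have hF : Measurable (fun p : (Fin (n + N) → Z) × V => ℓ (Alg α (n + N) p.1) p.2) :=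
          hℓ_meas.comp (((hAlg_meas α (n + N)).comp measurable_fst).prodMk measurable_snd)
        calc ∫ w, fX w ∂μQ
            = ∫ p : (Fin (n + N) → Z) × V, ℓ (Alg α (n + N) p.1) p.2
                ∂((Measure.pi fun _ : Fin (n + N) => Q).prod (T Q)) := by
              rw [← hψMP.map_eq,
                integral_map hψMP.measurable.aemeasurable hF.aestronglyMeasurable]
          _ ≤ α := hGuar α (Or.inl rfl) Q hQ (n + N)
      linarith
    · rw [integral_undef hi]
      have : 0 ≤ c * tvDist (μP.map fX) (μQ.map fX) := mul_nonneg hc.le hd0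
      linarith
  calc ∫ w, gG w ∂μP ≤ min (α + ε) (α + c * tvDist (μP.map fX) (μQ.map fX)) :=
        le_min hb1 hb2
    _ = α + min ε (c * tvDist (μP.map fX) (μQ.map fX)) := min_add_add_left α ε _
end

section
/- For every n ∈ ℕ, every p ∈ [0,1] and every q ∈ (0,1), the total variation distance between the Binomial(n, p) and Binomial(n, q) distributions satisfies d_TV(Binomial(n, p), Binomial(n, q)) ≤ √(n/(2q(1−q)))·|p − q|. -/
open MeasureTheory Finset Real

/-- The `Binomial(n, p)` distribution as a measure on `ℕ`: the law of the
number of successes among `n` i.i.d. `Bernoulli(p)` trials, i.e., it puts mass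
`C(n,k) pᵏ (1−p)^{n−k}` on each `k`. -/
noncomputable def binomMeasure (n : ℕ) (p : ℝ) : Measure ℕ :=
  Measure.sum fun k : ℕ =>
    ENNReal.ofReal ((n.choose k : ℝ) * p ^ k * (1 - p) ^ (n - k)) • Measure.dirac k


section Aux
open Set

/-- pointwise lemma for log-sum -/
lemma term_log_sum {fk gk F G : ℝ} (hfk : 0 ≤ fk) (hgk : 0 < gk) (hF : fk ≤ F) (hG : 0 < G) :
    fk * Real.log (F / G) + fk - gk * (F / G) ≤ fk * Real.log (fk / gk) := by
  rcases eq_or_lt_of_le hfk with h0 | hfk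
  · have hF0 : (0:ℝ) ≤ F := le_trans hfk hF
    simp only [← h0, zero_mul, zero_add, zero_sub, neg_nonpos]
    positivity
  have hF : 0 < F := lt_of_lt_of_le hfk hF
  have h1 : Real.log (fk / gk) = Real.log (fk * G / (gk * F)) + Real.log (F / G) := by
    rw [← Real.log_mul (by positivity) (by positivity)]
    congr 1
    field_simp
  rw [h1, mul_add]
  have h2 : 1 - (gk * F) / (fk * G) ≤ Real.log (fk * G / (gk * F)) := by
    have := Real.log_le_sub_one_of_pos (x := (gk * F) / (fk * G)) (by positivity)
    rw [Real.log_div (by positivity) (by positivity)] at this ⊢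
    linarith
  have h3 : fk * (1 - (gk * F) / (fk * G)) = fk - gk * (F / G) := by
    field_simp
  nlinarith [mul_le_mul_of_nonneg_left h2 hfk.le]

/-- log-sum inequality -/
lemma log_sum_ineq {ι : Type*} (s : Finset ι) (f g : ι → ℝ)
    (hf : ∀ k ∈ s, 0 ≤ f k) (hg : ∀ k ∈ s, 0 < g k) (hG : 0 < ∑ k ∈ s, g k) :
    (∑ k ∈ s, f k) * Real.log ((∑ k ∈ s, f k) / (∑ k ∈ s, g k))
      ≤ ∑ k ∈ s, f k * Real.log (f k / g k) := by
  set F := ∑ k ∈ s, f k with hFdef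
  set G := ∑ k ∈ s, g k with hGdef
  have hF : 0 ≤ F := Finset.sum_nonneg hf
  have key : ∀ k ∈ s, f k * Real.log (F / G) + f k - g k * (F / G)
      ≤ f k * Real.log (f k / g k) := fun k hk =>
    term_log_sum (hf k hk) (hg k hk) (Finset.single_le_sum hf hk) hG
  have hsum := Finset.sum_le_sum key
  have : ∑ k ∈ s, (f k * Real.log (F / G) + f k - g k * (F / G))
      = F * Real.log (F / G) := by
    rw [Finset.sum_sub_distrib, Finset.sum_add_distrib, ← Finset.sum_mul, ← Finset.sum_mul]
    rw [← hFdef, ← hGdef]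
    field_simp
    ring
  linarith [hsum, this.symm.le]

lemma quarter_bound {x : ℝ} (hx0 : 0 < x) (hx1 : x < 1) : 1/(x*(1-x)) - 4 ≥ 0 := by
  rw [ge_iff_le, sub_nonneg, le_div_iff₀ (by nlinarith)]
  nlinarith [sq_nonneg (2*x - 1)]

/-- Pinsker, case a = 0 : 2*b^2 ≤ -log(1-b) -/
lemma pinsker_a0 {b : ℝ} (hb0 : 0 < b) (hb1 : b < 1) : 2 * b^2 ≤ -Real.log (1 - b) := by
  have key : MonotoneOn (fun x => -Real.log (1-x) - 2*x^2) (Icc 0 b) := by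
    have hderiv : ∀ x ∈ Ioo (0:ℝ) b, HasDerivAt (fun x => -Real.log (1-x) - 2*x^2)
        (1/(1-x) - 4*x) x := by
      intro x hx
      have h1x : 1 - x ≠ 0 := by rcases hx with ⟨h1,h2⟩; intro h; nlinarith
      have h1 : HasDerivAt (fun x : ℝ => 1 - x) (-1) x := by
        simpa using (hasDerivAt_id x).const_sub 1
      have h2 := (h1.log h1x).neg
      have h3 : HasDerivAt (fun x : ℝ => 2*x^2) (4*x) x := by
        have h := (hasDerivAt_pow 2 x).const_mul (2:ℝ)
        norm_num at h
        refine h.congr_deriv ?_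
        ring
      have := h2.sub h3
      refine this.congr_deriv ?_
      field_simp
    apply monotoneOn_of_deriv_nonneg (convex_Icc 0 b)
    · apply ContinuousOn.sub
      · apply ContinuousOn.neg
        apply ContinuousOn.log (by fun_prop)
        intro x hx
        simp only [Set.mem_Icc] at hx
        intro h; nlinarith [hx.1, hx.2]
      · fun_prop
    · intro x hx
      rw [interior_Icc] at hx
      exact ((hderiv x hx).differentiableAt).differentiableWithinAt
    · intro x hx
      rw [interior_Icc] at hx
      rw [(hderiv x hx).deriv]
      have hx0 := hx.1; have hxb := hx.2
      have h1x : 0 < 1 - x := by nlinarith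
      have : 1/(1-x) - 4*x = (1-2*x)^2 / (1-x) := by field_simp; ring
      rw [this]; positivity
  have := key (Set.mem_Icc.2 ⟨le_refl 0, hb0.le⟩) (Set.mem_Icc.2 ⟨hb0.le, le_refl b⟩) hb0.le
  simpa using this

/-- Pinsker, case a = 1 : 2*(1-b)^2 ≤ -log b -/
lemma pinsker_a1 {b : ℝ} (hb0 : 0 < b) (hb1 : b < 1) : 2 * (1-b)^2 ≤ -Real.log b := by
  have := pinsker_a0 (b := 1 - b) (by linarith) (by linarith)
  simpa using this

/-- Two-point Pinsker inequality. -/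
lemma pinsker_two_point {a b : ℝ} (ha : a ∈ Icc (0:ℝ) 1) (hb : b ∈ Ioo (0:ℝ) 1) :
    2 * (a - b)^2 ≤ a * Real.log (a/b) + (1-a) * Real.log ((1-a)/(1-b)) := by
  obtain ⟨hb0, hb1⟩ := hb
  rcases eq_or_lt_of_le ha.1 with ha0 | ha0
  · rw [← ha0]
    have := pinsker_a0 hb0 hb1
    rw [Real.log_div (by norm_num) (by linarith : (0:ℝ) < 1 - b).ne']
    simp only [zero_mul, zero_add, sub_zero, one_mul, Real.log_one, zero_sub]
    nlinarith [this]
  rcases eq_or_lt_of_le ha.2 with ha1 | ha1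
  · rw [ha1]
    have := pinsker_a1 hb0 hb1
    rw [Real.log_div (by norm_num) (by positivity)]
    simp only [sub_self, zero_mul, add_zero, one_mul, Real.log_one, zero_sub]
    nlinarith [this]
  -- interior case
  set G : ℝ → ℝ := fun x => a * Real.log a - a * Real.log x
      + (1-a) * Real.log (1-a) - (1-a) * Real.log (1-x) - 2*(a-x)^2 with hGdef
  have hderiv : ∀ x ∈ Ioo (0:ℝ) 1, HasDerivAt G (-a/x + (1-a)/(1-x) + 4*(a-x)) x := by
    intro x hx
    obtain ⟨hx0, hx1⟩ := hx
    have hx0' : x ≠ 0 := ne_of_gt hx0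
    have h1x : (1:ℝ) - x ≠ 0 := by intro h; nlinarith
    have d1 : HasDerivAt (fun x : ℝ => a * Real.log x) (a/x) x := by
      have := (Real.hasDerivAt_log hx0').const_mul a
      simpa [div_eq_mul_inv] using this
    have d2 : HasDerivAt (fun x : ℝ => (1-a) * Real.log (1-x)) (-((1-a)/(1-x))) x := by
      have hi : HasDerivAt (fun x : ℝ => 1 - x) (-1) x := by
        simpa using (hasDerivAt_id x).const_sub 1
      have := (hi.log h1x).const_mul (1-a)
      refine this.congr_deriv ?_
      field_simp
    have d3 : HasDerivAt (fun x : ℝ => 2*(a-x)^2) (-(4*(a-x))) x := by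
      have hi : HasDerivAt (fun x : ℝ => a - x) (-1) x := by
        simpa using (hasDerivAt_id x).const_sub a
      have := ((hi.pow 2)).const_mul (2:ℝ)
      refine this.congr_deriv ?_
      norm_num
      ring
    have := (((hasDerivAt_const x (a * Real.log a)).sub d1).add
        ((hasDerivAt_const x ((1-a) * Real.log (1-a))).sub d2)).sub d3
    convert this using 1
    · rfl
    · rfl
    · ext y; simp only [hGdef, Pi.sub_apply, Pi.add_apply]; ring
    · ring
  have hsign : ∀ x ∈ Ioo (0:ℝ) 1,
      -a/x + (1-a)/(1-x) + 4*(a-x) = (x-a) * (1/(x*(1-x)) - 4) := by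
    intro x hx
    obtain ⟨hx0, hx1⟩ := hx
    have h1x : (0:ℝ) < 1 - x := by linarith
    field_simp
    ring
  have hGa : G a = 0 := by
    simp only [hGdef]
    ring
  have key : 0 ≤ G b := by
    rcases le_total a b with hab | hab
    · have mono : MonotoneOn G (Icc a b) := by
        apply monotoneOn_of_deriv_nonneg (convex_Icc a b)
        · intro x hx
          have hx' : x ∈ Ioo (0:ℝ) 1 := ⟨lt_of_lt_of_le ha0 hx.1, lt_of_le_of_lt hx.2 hb1⟩
          exact ((hderiv x hx').differentiableAt).continuousAt.continuousWithinAt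
        · intro x hx
          rw [interior_Icc] at hx
          have hx' : x ∈ Ioo (0:ℝ) 1 := ⟨lt_trans ha0 hx.1, lt_trans hx.2 hb1⟩
          exact ((hderiv x hx').differentiableAt).differentiableWithinAt
        · intro x hx
          rw [interior_Icc] at hx
          have hx' : x ∈ Ioo (0:ℝ) 1 := ⟨lt_trans ha0 hx.1, lt_trans hx.2 hb1⟩
          rw [(hderiv x hx').deriv, hsign x hx']
          have := quarter_bound hx'.1 hx'.2
          have : 0 ≤ x - a := by linarith [hx.1]
          nlinarith [quarter_bound hx'.1 hx'.2]
      have := mono (Set.mem_Icc.2 ⟨le_refl a, hab⟩) (Set.mem_Icc.2 ⟨hab, le_refl b⟩) hab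
      linarith [hGa ▸ this]
    · have anti : AntitoneOn G (Icc b a) := by
        apply antitoneOn_of_deriv_nonpos (convex_Icc b a)
        · intro x hx
          have hx' : x ∈ Ioo (0:ℝ) 1 := ⟨lt_of_lt_of_le hb0 hx.1, lt_of_le_of_lt hx.2 ha1⟩
          exact ((hderiv x hx').differentiableAt).continuousAt.continuousWithinAt
        · intro x hx
          rw [interior_Icc] at hx
          have hx' : x ∈ Ioo (0:ℝ) 1 := ⟨lt_trans hb0 hx.1, lt_trans hx.2 ha1⟩
          exact ((hderiv x hx').differentiableAt).differentiableWithinAt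
        · intro x hx
          rw [interior_Icc] at hx
          have hx' : x ∈ Ioo (0:ℝ) 1 := ⟨lt_trans hb0 hx.1, lt_trans hx.2 ha1⟩
          rw [(hderiv x hx').deriv, hsign x hx']
          have hxa : x - a ≤ 0 := by linarith [hx.2]
          nlinarith [quarter_bound hx'.1 hx'.2]
      have := anti (Set.mem_Icc.2 ⟨le_refl b, hab⟩) (Set.mem_Icc.2 ⟨hab, le_refl a⟩) hab
      linarith [hGa ▸ this]
  have hrw : a * Real.log (a/b) + (1-a) * Real.log ((1-a)/(1-b))
      = G b + 2*(a-b)^2 := by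
    rw [Real.log_div (ne_of_gt ha0) (ne_of_gt hb0),
        Real.log_div (by linarith : (0:ℝ) < 1 - a).ne' (by linarith : (0:ℝ) < 1 - b).ne']
    simp only [hGdef]
    ring
  rw [hrw]
  linarith
noncomputable def bp (n : ℕ) (p : ℝ) (k : ℕ) : ℝ := (n.choose k : ℝ) * p ^ k * (1 - p) ^ (n - k)

lemma sum_bp (n : ℕ) (p : ℝ) : ∑ k ∈ range (n+1), bp n p k = 1 := by
  have := add_pow p (1-p) n
  simp only [add_sub_cancel, one_pow] at this
  rw [this]
  apply Finset.sum_congr rfl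
  intro k hk
  simp [bp]; ring

lemma sum_mul_bp (n : ℕ) (p : ℝ) : ∑ k ∈ range (n+1), (k:ℝ) * bp n p k = n * p := by
  cases n with
  | zero => simp [bp]
  | succ m =>
    rw [Finset.sum_range_succ']
    simp only [Nat.cast_zero, zero_mul, add_zero]
    have key : ∀ j : ℕ, ((j:ℝ)+1) * ((m+1).choose (j+1) : ℝ) = ((m:ℝ)+1) * (m.choose j : ℝ) := by
      intro j
      have h : (m+1) * m.choose j = (m+1).choose (j+1) * (j+1) := Nat.add_one_mul_choose_eq m j
      have h' : ((m:ℝ)+1) * (m.choose j : ℝ) = ((m+1).choose (j+1) : ℝ) * ((j:ℝ)+1) := by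
        exact_mod_cast congrArg (fun x : ℕ => (x : ℝ)) h
      linarith [h']
    calc ∑ j ∈ range (m+1), ((j+1 : ℕ):ℝ) * bp (m+1) p (j+1)
        = ∑ j ∈ range (m+1), ((m:ℝ)+1) * p * bp m p j := by
          apply Finset.sum_congr rfl
          intro j hj
          simp only [bp, Nat.succ_sub_succ]
          push_cast
          linear_combination (p^(j+1) * (1-p)^(m-j)) * (key j)
      _ = ((m:ℝ)+1) * p * ∑ j ∈ range (m+1), bp m p j := by
          rw [Finset.mul_sum]
      _ = ((m+1:ℕ):ℝ) * p := by rw [sum_bp]; push_cast; ring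
lemma bp_nonneg {n : ℕ} {p : ℝ} (hp : p ∈ Icc (0:ℝ) 1) (k : ℕ) : 0 ≤ bp n p k := by
  have h1 := hp.1; have h2 := hp.2
  have : (0:ℝ) ≤ 1 - p := by linarith
  unfold bp; positivity

lemma bp_pos {n : ℕ} {q : ℝ} (hq : q ∈ Ioo (0:ℝ) 1) {k : ℕ} (hk : k ≤ n) : 0 < bp n q k := by
  have h1 := hq.1; have h2 := hq.2
  have h3 : (0:ℝ) < 1 - q := by linarith
  have hC : (0:ℝ) < (n.choose k : ℝ) := by exact_mod_cast Nat.choose_pos hk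
  unfold bp; positivity

lemma log_bp_div {n : ℕ} {p q : ℝ} (hp : p ∈ Icc (0:ℝ) 1) (hq : q ∈ Ioo (0:ℝ) 1)
    {k : ℕ} (hk : k ≤ n) :
    bp n p k * Real.log (bp n p k / bp n q k)
      = bp n p k * ((k:ℝ) * Real.log (p/q) + ((n:ℝ) - (k:ℝ)) * Real.log ((1-p)/(1-q))) := by
  by_cases hbp : bp n p k = 0
  · rw [hbp]; ring
  have hfacts : ((n.choose k : ℝ) * p ^ k) ≠ 0 ∧ (1-p)^(n-k) ≠ 0 := by
    unfold bp at hbp; exact mul_ne_zero_iff.mp hbp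
  have h2 : p ^ k ≠ 0 := (mul_ne_zero_iff.mp hfacts.1).2
  have hppos : 0 < p ^ k := (pow_nonneg hp.1 k).lt_of_ne (Ne.symm h2)
  have h1ppos : 0 < (1-p)^(n-k) :=
    (pow_nonneg (by linarith [hp.2] : (0:ℝ) ≤ 1-p) _).lt_of_ne (Ne.symm hfacts.2)
  have hqpos : 0 < q^k := pow_pos hq.1 k
  have h1qpos : 0 < (1-q)^(n-k) := pow_pos (by linarith [hq.2] : (0:ℝ) < 1-q) _
  have hC : (0:ℝ) < (n.choose k : ℝ) := by exact_mod_cast Nat.choose_pos hk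
  congr 1
  have hdiv : bp n p k / bp n q k = (p/q)^k * ((1-p)/(1-q))^(n-k) := by
    unfold bp; rw [div_pow, div_pow]; field_simp
  rw [hdiv, Real.log_mul (ne_of_gt (by rw [div_pow]; exact div_pos hppos hqpos))
      (ne_of_gt (by rw [div_pow]; exact div_pos h1ppos h1qpos)), Real.log_pow, Real.log_pow,
      Nat.cast_sub hk]

lemma KL_eq {n : ℕ} {p q : ℝ} (hp : p ∈ Icc (0:ℝ) 1) (hq : q ∈ Ioo (0:ℝ) 1) :
    ∑ k ∈ range (n+1), bp n p k * Real.log (bp n p k / bp n q k)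
      = (n:ℝ) * (p * Real.log (p/q) + (1-p) * Real.log ((1-p)/(1-q))) := by
  set L1 := Real.log (p/q) with hL1
  set L2 := Real.log ((1-p)/(1-q)) with hL2
  have step1 : ∑ k ∈ range (n+1), bp n p k * Real.log (bp n p k / bp n q k)
      = ∑ k ∈ range (n+1), (((k:ℝ) * bp n p k) * L1 + ((n:ℝ) * bp n p k) * L2
          - ((k:ℝ) * bp n p k) * L2) := by
    apply Finset.sum_congr rfl
    intro k hk
    rw [log_bp_div hp hq (Nat.lt_succ_iff.mp (Finset.mem_range.mp hk))]
    ring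
  rw [step1, Finset.sum_sub_distrib, Finset.sum_add_distrib, ← Finset.sum_mul,
      ← Finset.sum_mul, ← Finset.sum_mul, ← Finset.mul_sum, sum_mul_bp, sum_bp]
  ring

lemma kl_le_chisq {p q : ℝ} (hp : p ∈ Icc (0:ℝ) 1) (hq : q ∈ Ioo (0:ℝ) 1) :
    p * Real.log (p/q) + (1-p) * Real.log ((1-p)/(1-q)) ≤ (p-q)^2/(q*(1-q)) := by
  obtain ⟨hq0, hq1⟩ := hq
  have h1q : (0:ℝ) < 1 - q := by linarith
  have hA : p * Real.log (p/q) ≤ p * (p/q - 1) := by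
    rcases eq_or_lt_of_le hp.1 with h | h
    · rw [← h]; simp
    · exact mul_le_mul_of_nonneg_left (Real.log_le_sub_one_of_pos (by positivity)) h.le
  have hB : (1-p) * Real.log ((1-p)/(1-q)) ≤ (1-p) * ((1-p)/(1-q) - 1) := by
    rcases eq_or_lt_of_le (by linarith [hp.2] : (0:ℝ) ≤ 1 - p) with h | h
    · rw [← h]; simp
    · exact mul_le_mul_of_nonneg_left (Real.log_le_sub_one_of_pos (by positivity)) h.le
  have heq : p * (p/q - 1) + (1-p) * ((1-p)/(1-q) - 1) = (p-q)^2/(q*(1-q)) := by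
    field_simp
    ring
  linarith
open scoped Classical in
lemma binomMeasure_apply (n : ℕ) {p : ℝ} (hp : p ∈ Set.Icc (0:ℝ) 1) {s : Set ℕ}
    (hs : MeasurableSet s) :
    (binomMeasure n p s).toReal
      = ∑ k ∈ (range (n+1)).filter (· ∈ s), bp n p k := by
  classical
  have h1 : binomMeasure n p s
      = ∑' k : ℕ, ENNReal.ofReal (bp n p k) * s.indicator 1 k := by
    rw [binomMeasure, Measure.sum_apply _ hs]
    apply tsum_congr
    intro k
    rw [Measure.smul_apply, Measure.dirac_apply' _ hs, smul_eq_mul]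
    rfl
  have h2 : ∀ k ∉ range (n+1), ENNReal.ofReal (bp n p k) * s.indicator 1 k = 0 := by
    intro k hk
    have : n < k := by simpa using Finset.mem_range.not.mp hk
    have : n.choose k = 0 := Nat.choose_eq_zero_of_lt this
    simp [bp, this]
  rw [h1, tsum_eq_sum h2]
  have h3 : ∀ k ∈ range (n+1), ENNReal.ofReal (bp n p k) * s.indicator 1 k
      = if k ∈ s then ENNReal.ofReal (bp n p k) else 0 := by
    intro k _
    by_cases hks : k ∈ s <;> simp [Set.indicator_apply, hks]
  rw [Finset.sum_congr rfl h3, ← Finset.sum_filter, ENNReal.toReal_sum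
    (fun a _ => ENNReal.ofReal_ne_top)]
  apply Finset.sum_congr rfl
  intro k _
  exact ENNReal.toReal_ofReal (bp_nonneg hp k)

end Aux

open Set in
/-- **Total variation bound between binomial distributions.**

For every `n`, `p ∈ [0,1]` and `q ∈ (0,1)`,
`d_TV(Binomial(n,p), Binomial(n,q)) ≤ √(n/(2q(1−q)))·|p − q|`. -/
theorem binomial_tv_bound
    (n : ℕ) (p q : ℝ) (hp : p ∈ Set.Icc (0 : ℝ) 1) (hq : q ∈ Set.Ioo (0 : ℝ) 1) :
    tvDist (binomMeasure n p) (binomMeasure n q)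
      ≤ Real.sqrt ((n : ℝ) / (2 * q * (1 - q))) * |p - q| := by
  classical
  obtain ⟨hq0, hq1⟩ := hq
  have hq' : q ∈ Set.Icc (0:ℝ) 1 := ⟨hq0.le, hq1.le⟩
  have hq1' : (0:ℝ) < 1 - q := by linarith
  have hRHS : 0 ≤ Real.sqrt ((n : ℝ) / (2 * q * (1 - q))) * |p - q| := by positivity
  haveI : Nonempty {s : Set ℕ // MeasurableSet s} := ⟨⟨∅, MeasurableSet.empty⟩⟩
  apply ciSup_le
  rintro ⟨s, hs⟩
  rw [binomMeasure_apply n hp hs, binomMeasure_apply n hq' hs]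
  set F : Finset ℕ := Finset.range (n+1) with hF
  set A : Finset ℕ := F.filter (fun k => bp n q k ≤ bp n p k) with hA
  set Ac : Finset ℕ := F.filter (fun k => ¬ (bp n q k ≤ bp n p k)) with hAc
  set T : Finset ℕ := F.filter (· ∈ s) with hT
  have hfk : ∀ k ∈ F, 0 ≤ bp n p k := fun k _ => bp_nonneg hp k
  have hgpos : ∀ k ∈ F, 0 < bp n q k := fun k hk =>
    bp_pos ⟨hq0, hq1⟩ (Nat.lt_succ_iff.mp (Finset.mem_range.mp hk))
  have hsumf : ∑ k ∈ F, bp n p k = 1 := sum_bp n p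
  have hsumg : ∑ k ∈ F, bp n q k = 1 := sum_bp n q
  set a : ℝ := ∑ k ∈ A, bp n p k with ha
  set b : ℝ := ∑ k ∈ A, bp n q k with hb
  have hsplitf : a + ∑ k ∈ Ac, bp n p k = 1 := by
    rw [ha, hAc, hA, Finset.sum_filter_add_sum_filter_not]; exact hsumf
  have hsplitg : b + ∑ k ∈ Ac, bp n q k = 1 := by
    rw [hb, hAc, hA, Finset.sum_filter_add_sum_filter_not]; exact hsumg
  have hDnonneg : 0 ≤ a - b := by
    rw [ha, hb, ← Finset.sum_sub_distrib]
    apply Finset.sum_nonneg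
    intro k hk
    have := (Finset.mem_filter.mp hk).2
    linarith
  -- Step 1: |μ_p(s) - μ_q(s)| ≤ a - b
  have habs : |∑ k ∈ T, bp n p k - ∑ k ∈ T, bp n q k| ≤ a - b := by
    rw [← Finset.sum_sub_distrib]
    rw [abs_le]
    constructor
    · -- lower bound : -(a-b) ≤ ∑_T (f-g), i.e. ∑_T (g-f) ≤ a-b
      have h1 : ∑ k ∈ T, (bp n q k - bp n p k)
          ≤ ∑ k ∈ T.filter (fun k => ¬ (bp n q k ≤ bp n p k)), (bp n q k - bp n p k) := by
        rw [← Finset.sum_filter_add_sum_filter_not T (fun k => ¬ (bp n q k ≤ bp n p k))]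
        have : ∑ k ∈ T.filter (fun k => ¬¬(bp n q k ≤ bp n p k)), (bp n q k - bp n p k) ≤ 0 := by
          apply Finset.sum_nonpos
          intro k hk
          have := (Finset.mem_filter.mp hk).2
          rw [not_not] at this
          linarith
        linarith
      have h2 : ∑ k ∈ T.filter (fun k => ¬ (bp n q k ≤ bp n p k)), (bp n q k - bp n p k)
          ≤ ∑ k ∈ Ac, (bp n q k - bp n p k) := by
        apply Finset.sum_le_sum_of_subset_of_nonneg
        · intro k hk
          rw [Finset.mem_filter] at hk ⊢
          exact ⟨(Finset.mem_filter.mp hk.1).1, hk.2⟩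
        · intro k hk _
          have := (Finset.mem_filter.mp hk).2
          push_neg at this
          linarith
      have h3 : ∑ k ∈ Ac, (bp n q k - bp n p k) = a - b := by
        rw [Finset.sum_sub_distrib]
        linarith [hsplitf, hsplitg]
      have : ∑ k ∈ T, (bp n q k - bp n p k)
          = -∑ k ∈ T, (bp n p k - bp n q k) := by
        rw [← Finset.sum_neg_distrib]
        apply Finset.sum_congr rfl
        intro k _; ring
      linarith [h1, h2, h3, this]
    · -- upper bound
      have h1 : ∑ k ∈ T, (bp n p k - bp n q k)
          ≤ ∑ k ∈ T.filter (fun k => bp n q k ≤ bp n p k), (bp n p k - bp n q k) := by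
        rw [← Finset.sum_filter_add_sum_filter_not T (fun k => bp n q k ≤ bp n p k)]
        have : ∑ k ∈ T.filter (fun k => ¬(bp n q k ≤ bp n p k)), (bp n p k - bp n q k) ≤ 0 := by
          apply Finset.sum_nonpos
          intro k hk
          have := (Finset.mem_filter.mp hk).2
          push_neg at this
          linarith
        linarith
      have h2 : ∑ k ∈ T.filter (fun k => bp n q k ≤ bp n p k), (bp n p k - bp n q k)
          ≤ ∑ k ∈ A, (bp n p k - bp n q k) := by
        apply Finset.sum_le_sum_of_subset_of_nonneg
        · intro k hk
          rw [Finset.mem_filter] at hk ⊢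
          exact ⟨(Finset.mem_filter.mp hk.1).1, hk.2⟩
        · intro k hk _
          have := (Finset.mem_filter.mp hk).2
          linarith
      have h3 : ∑ k ∈ A, (bp n p k - bp n q k) = a - b := by
        rw [Finset.sum_sub_distrib]
      linarith [h1, h2, h3]
  refine le_trans habs ?_
  -- Step 2: a - b ≤ RHS
  rcases Finset.eq_empty_or_nonempty A with hAe | hAne
  · have : a - b = 0 := by rw [ha, hb, hAe]; simp
    linarith [hRHS]
  by_cases hAF : A = F
  · have : a - b = 0 := by
      rw [ha, hb, hAF, hsumf, hsumg]; ring
    linarith [hRHS]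
  -- main case
  have hbpos : 0 < b := by
    rw [hb]
    exact Finset.sum_pos (fun k hk => hgpos k (Finset.filter_subset _ _ hk)) hAne
  have hb1 : b < 1 := by
    obtain ⟨i, hiF, hiA⟩ : ∃ i ∈ F, i ∉ A := by
      by_contra h
      push_neg at h
      exact hAF (Finset.eq_of_subset_of_card_le (Finset.filter_subset _ _)
        (Finset.card_le_card h))
    have := Finset.sum_lt_sum_of_subset (Finset.filter_subset
      (fun k => bp n q k ≤ bp n p k) F) hiF hiA (hgpos i hiF)
      (fun j _ _ => (hgpos j (by assumption)).le)
    rw [hsumg] at this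
    exact hb ▸ this
  have ha0 : 0 ≤ a := Finset.sum_nonneg (fun k hk => hfk k (Finset.filter_subset _ _ hk))
  have ha1 : a ≤ 1 := by
    rw [ha, ← hsumf]
    exact Finset.sum_le_sum_of_subset_of_nonneg (Finset.filter_subset _ _)
      (fun k hk _ => hfk k hk)
  have P1 : 2 * (a - b)^2 ≤ a * Real.log (a/b) + (1-a) * Real.log ((1-a)/(1-b)) :=
    pinsker_two_point ⟨ha0, ha1⟩ ⟨hbpos, hb1⟩
  have P2 : a * Real.log (a/b) ≤ ∑ k ∈ A, bp n p k * Real.log (bp n p k / bp n q k) :=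
    log_sum_ineq A _ _ (fun k hk => hfk k (Finset.filter_subset _ _ hk))
      (fun k hk => hgpos k (Finset.filter_subset _ _ hk)) hbpos
  have P3 : (1-a) * Real.log ((1-a)/(1-b))
      ≤ ∑ k ∈ Ac, bp n p k * Real.log (bp n p k / bp n q k) := by
    have h1 : ∑ k ∈ Ac, bp n p k = 1 - a := by linarith [hsplitf]
    have h2 : ∑ k ∈ Ac, bp n q k = 1 - b := by linarith [hsplitg]
    have := log_sum_ineq Ac (bp n p) (bp n q)
      (fun k hk => hfk k (Finset.filter_subset _ _ hk))
      (fun k hk => hgpos k (Finset.filter_subset _ _ hk))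
      (by rw [h2]; linarith)
    rw [h1, h2] at this
    exact this
  have P4 : ∑ k ∈ A, bp n p k * Real.log (bp n p k / bp n q k)
      + ∑ k ∈ Ac, bp n p k * Real.log (bp n p k / bp n q k)
      = ∑ k ∈ F, bp n p k * Real.log (bp n p k / bp n q k) := by
    rw [hA, hAc, Finset.sum_filter_add_sum_filter_not]
  have P5 : ∑ k ∈ F, bp n p k * Real.log (bp n p k / bp n q k)
      = (n:ℝ) * (p * Real.log (p/q) + (1-p) * Real.log ((1-p)/(1-q))) :=
    KL_eq hp ⟨hq0, hq1⟩
  have P6 : p * Real.log (p/q) + (1-p) * Real.log ((1-p)/(1-q)) ≤ (p-q)^2/(q*(1-q)) :=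
    kl_le_chisq hp ⟨hq0, hq1⟩
  have P7 : 2 * (a - b)^2 ≤ (n:ℝ) * ((p-q)^2/(q*(1-q))) := by
    have hn : (0:ℝ) ≤ n := Nat.cast_nonneg n
    have P56 : ∑ k ∈ F, bp n p k * Real.log (bp n p k / bp n q k)
        ≤ (n:ℝ) * ((p-q)^2/(q*(1-q))) := by
      rw [P5]
      exact mul_le_mul_of_nonneg_left P6 hn
    linarith [P1, P2, P3, P4, P56]
  have key : (a - b)^2 ≤ ((n:ℝ) / (2*q*(1-q))) * (p-q)^2 := by
    have heq : (n:ℝ) * ((p-q)^2/(q*(1-q))) / 2 = ((n:ℝ) / (2*q*(1-q))) * (p-q)^2 := by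
      field_simp [hq0.ne', hq1'.ne']
    linarith [P7, heq.symm.le, heq.le]
  calc a - b = Real.sqrt ((a-b)^2) := (Real.sqrt_sq hDnonneg).symm
    _ ≤ Real.sqrt (((n:ℝ) / (2*q*(1-q))) * (p-q)^2) := Real.sqrt_le_sqrt key
    _ = Real.sqrt ((n:ℝ) / (2*q*(1-q))) * |p - q| := by
        rw [Real.sqrt_mul (by positivity) ((p-q)^2), Real.sqrt_sq_eq_abs]
end

section
/- Let S₁, …, S_{n+1} be i.i.d. real-valued random variables whose common distribution is atomless, and define the rank R = Σ_{i=1}^{n+1} 1{S_i ≤ S_{n+1}}. Then R is uniformly distributed on {1, 2, …, n+1}, and R is independent of the order statistics vector (S_{(1)}, …, S_{(n+1)}). -/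
open MeasureTheory

/-- The `r`-th order statistic (`r`-th smallest value, `1`-indexed) of the
tuple `S` of `m` real numbers. -/
noncomputable def orderStat {m : ℕ} (r : ℕ) (S : Fin m → ℝ) : ℝ :=
  ((List.ofFn S).insertionSort (· ≤ ·)).getD (r - 1) 0

namespace RankAux

open Finset

variable {m : ℕ}

lemma sortedList_eq {ω : Fin m → ℝ} {σ : Equiv.Perm (Fin m)}
    (h : StrictMono (ω ∘ σ)) :
    (List.ofFn ω).insertionSort (· ≤ ·) = List.ofFn (ω ∘ σ) := by
  refine (fun hp h1 h2 => List.Perm.eq_of_pairwise' (r := fun a b : ℝ => a ≤ b) h1 h2 hp) ?_ ?_ ?_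
  · exact (List.perm_insertionSort _ _).trans (σ.ofFn_comp_perm ω).symm
  · exact List.pairwise_insertionSort _ _
  · exact List.pairwise_ofFn.2 fun i j hij => (h hij).le

lemma orderStat_eq {ω : Fin m → ℝ} {σ : Equiv.Perm (Fin m)}
    (h : StrictMono (ω ∘ σ)) (r : Fin m) :
    orderStat (r.1 + 1) ω = ω (σ r) := by
  rw [orderStat, sortedList_eq h]
  simp only [Nat.add_sub_cancel]
  rw [List.getD_eq_getElem _ _ (by simpa using r.2), List.getElem_ofFn]
  simp

lemma injective_of_strictMono {ω : Fin m → ℝ} {σ : Equiv.Perm (Fin m)}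
    (h : StrictMono (ω ∘ σ)) : Function.Injective ω := by
  have heq : ((ω ∘ ⇑σ) ∘ ⇑σ.symm) = ω := by
    funext x; simp
  exact heq ▸ (h.injective.comp σ.symm.injective)

lemma perm_unique {ω : Fin m → ℝ} {σ τ : Equiv.Perm (Fin m)}
    (hσ : StrictMono (ω ∘ σ)) (hτ : StrictMono (ω ∘ τ)) : σ = τ := by
  have hinj := injective_of_strictMono hσ
  have h1 := sortedList_eq hσ
  have h2 := sortedList_eq hτ
  have h3 : ω ∘ σ = ω ∘ τ := List.ofFn_inj.1 (h1 ▸ h2)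
  ext i
  exact congrArg Fin.val (hinj (congrFun h3 i))

lemma exists_perm {ω : Fin m → ℝ} (h : Function.Injective ω) :
    ∃ σ : Equiv.Perm (Fin m), StrictMono (ω ∘ σ) :=
  ⟨Tuple.sort ω, (Tuple.monotone_sort ω).strictMono_of_injective
    (h.comp (Tuple.sort ω).injective)⟩

lemma rank_eq {n : ℕ} {ω : Fin (n + 1) → ℝ} {σ : Equiv.Perm (Fin (n + 1))}
    (h : StrictMono (ω ∘ σ)) :
    (Finset.univ.filter fun i => ω i ≤ ω (Fin.last n)).card
      = (σ.symm (Fin.last n) : ℕ) + 1 := by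
  have hiff : ∀ i, (ω i ≤ ω (Fin.last n)) ↔ σ.symm i ≤ σ.symm (Fin.last n) := by
    intro i
    rw [← h.le_iff_le]
    simp
  have hset : (Finset.univ.filter fun i => ω i ≤ ω (Fin.last n))
      = (Finset.Iic (σ.symm (Fin.last n))).map σ.toEmbedding := by
    ext i
    simp [Finset.mem_map_equiv, hiff i]
  rw [hset, Finset.card_map, Fin.card_Iic]

/-- The event that `ω ∘ σ` is strictly increasing. -/
def eventA (σ : Equiv.Perm (Fin m)) : Set (Fin m → ℝ) := {ω | StrictMono (ω ∘ σ)}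

lemma measurable_comp_perm (σ : Equiv.Perm (Fin m)) :
    Measurable (fun ω : Fin m → ℝ => ω ∘ σ) :=
  measurable_pi_lambda _ fun i => measurable_pi_apply (σ i)

lemma measurableSet_eventA (σ : Equiv.Perm (Fin m)) :
    MeasurableSet (eventA σ) := by
  have : eventA σ = ⋂ (i : Fin m) (j : Fin m) (_ : i < j),
      {ω : Fin m → ℝ | ω (σ i) < ω (σ j)} := by
    ext ω
    simp only [eventA, Set.mem_iInter, Set.mem_setOf_eq]
    exact ⟨fun h i j hij => h hij, fun h i j hij => h i j hij⟩
  rw [this]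
  refine MeasurableSet.iInter fun i => MeasurableSet.iInter fun j =>
    MeasurableSet.iInter fun _ => ?_
  exact measurableSet_lt (measurable_pi_apply _) (measurable_pi_apply _)

variable (μ : Measure ℝ) [IsProbabilityMeasure μ]

lemma measurePreserving_comp_perm (σ : Equiv.Perm (Fin m)) :
    MeasurePreserving (fun ω : Fin m → ℝ => ω ∘ σ)
      (Measure.pi fun _ : Fin m => μ) (Measure.pi fun _ : Fin m => μ) := by
  have h := measurePreserving_piCongrLeft (fun _ : Fin m => μ) σ.symm
  have heq : ⇑(MeasurableEquiv.piCongrLeft (fun _ : Fin m => ℝ) σ.symm)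
      = fun ω : Fin m → ℝ => ω ∘ σ := by
    funext ω
    funext i
    have h2 := Equiv.piCongrLeft_apply_apply (fun _ : Fin m => ℝ) σ.symm ω (σ i)
    simpa [MeasurableEquiv.coe_piCongrLeft] using h2
  rw [heq] at h
  exact h

lemma measure_coord_eq_zero (hatomless : ∀ x : ℝ, μ {x} = 0)
    {n : ℕ} {i j : Fin (n + 1)} (hij : i ≠ j) :
    (Measure.pi fun _ : Fin (n + 1) => μ) {ω | ω i = ω j} = 0 := by
  obtain ⟨j', hj'⟩ := Fin.exists_succAbove_eq hij.symm
  have hmp := measurePreserving_piFinSuccAbove (fun _ : Fin (n + 1) => μ) i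
  set T : Set (ℝ × (Fin n → ℝ)) := {p | p.1 = p.2 j'} with hT
  have hTmeas : MeasurableSet T :=
    measurableSet_eq_fun measurable_fst ((measurable_pi_apply j').comp measurable_snd)
  have hpre : {ω : Fin (n + 1) → ℝ | ω i = ω j}
      = (MeasurableEquiv.piFinSuccAbove (fun _ => ℝ) i) ⁻¹' T := by
    ext ω
    simp only [Set.mem_setOf_eq, Set.mem_preimage, hT]
    rw [← hj']
    rfl
  rw [hpre, hmp.measure_preimage hTmeas.nullMeasurableSet]
  rw [Measure.prod_apply hTmeas]
  have hzero : ∀ x : ℝ, (Measure.pi fun _ : Fin n => μ) (Prod.mk x ⁻¹' T) = 0 := by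
    intro x
    have : Prod.mk x ⁻¹' T = Function.eval j' ⁻¹' ({x} : Set ℝ) := by
      ext y
      simp [hT, Function.eval, eq_comm]
    rw [this]
    exact Measure.pi_eval_preimage_null _ (hatomless x)
  simp only [hzero]
  simp

lemma measure_not_injective (hatomless : ∀ x : ℝ, μ {x} = 0) {n : ℕ} :
    (Measure.pi fun _ : Fin (n + 1) => μ) {ω | Function.Injective ω}ᶜ = 0 := by
  have hsub : {ω : Fin (n + 1) → ℝ | Function.Injective ω}ᶜ ⊆
      ⋃ (i : Fin (n + 1)) (j : Fin (n + 1)) (_ : i ≠ j), {ω | ω i = ω j} := by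
    intro ω hω
    simp only [Set.mem_compl_iff, Set.mem_setOf_eq, Function.Injective] at hω
    push_neg at hω
    obtain ⟨a, b, hab, hne⟩ := hω
    exact Set.mem_iUnion.2 ⟨a, Set.mem_iUnion.2 ⟨b, Set.mem_iUnion.2 ⟨hne, hab⟩⟩⟩
  refine measure_mono_null hsub ?_
  refine measure_iUnion_null fun i => measure_iUnion_null fun j =>
    measure_iUnion_null fun hij => ?_
  exact measure_coord_eq_zero μ hatomless hij

lemma measure_eventA_inter (σ : Equiv.Perm (Fin m)) {B : Set (Fin m → ℝ)}
    (hB : MeasurableSet B) :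
    (Measure.pi fun _ : Fin m => μ) (eventA σ ∩ (· ∘ σ) ⁻¹' B)
      = (Measure.pi fun _ : Fin m => μ) (eventA 1 ∩ B) := by
  have h := measurePreserving_comp_perm μ σ
  have hpre : (fun ω : Fin m → ℝ => ω ∘ σ) ⁻¹' (eventA 1 ∩ B)
      = eventA σ ∩ (· ∘ σ) ⁻¹' B := by
    ext ω
    simp [eventA]
  rw [← hpre, h.measure_preimage ((measurableSet_eventA 1).inter hB).nullMeasurableSet]

lemma measure_eq_card_mul (hatomless : ∀ x : ℝ, μ {x} = 0) {n : ℕ}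
    (P : Equiv.Perm (Fin (n + 1)) → Prop) [DecidablePred P]
    {B : Set (Fin (n + 1) → ℝ)} (hB : MeasurableSet B) (S : Set (Fin (n + 1) → ℝ))
    (hS : ∀ ω : Fin (n + 1) → ℝ, Function.Injective ω →
      (ω ∈ S ↔ ∃ σ, P σ ∧ StrictMono (ω ∘ σ) ∧ ω ∘ σ ∈ B)) :
    (Measure.pi fun _ : Fin (n + 1) => μ) S
      = ((Finset.univ.filter P).card : ENNReal)
        * (Measure.pi fun _ : Fin (n + 1) => μ) (eventA 1 ∩ B) := by
  set π := Measure.pi fun _ : Fin (n + 1) => μ with hπ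
  have hI : π {ω | Function.Injective ω}ᶜ = 0 := measure_not_injective μ hatomless
  rw [← measure_inter_conull hI]
  have hdecomp : S ∩ {ω | Function.Injective ω}
      = ⋃ σ ∈ Finset.univ.filter P, (eventA σ ∩ (· ∘ σ) ⁻¹' B) := by
    ext ω
    simp only [Set.mem_inter_iff, Set.mem_setOf_eq, Set.mem_iUnion, Finset.mem_filter,
      Finset.mem_univ, true_and, Set.mem_preimage, eventA]
    constructor
    · rintro ⟨hωS, hωI⟩
      obtain ⟨σ, hPσ, hmono, hBσ⟩ := (hS ω hωI).1 hωS
      exact ⟨σ, hPσ, hmono, hBσ⟩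
    · rintro ⟨σ, hPσ, hmono, hBσ⟩
      have hωI : Function.Injective ω := injective_of_strictMono hmono
      exact ⟨(hS ω hωI).2 ⟨σ, hPσ, hmono, hBσ⟩, hωI⟩
  rw [hdecomp, measure_biUnion_finset]
  · rw [Finset.sum_congr rfl (fun σ _ => measure_eventA_inter μ σ hB)]
    rw [Finset.sum_const, nsmul_eq_mul]
  · intro σ _ τ _ hστ
    refine Set.disjoint_left.2 fun ω h1 h2 => hστ ?_
    exact perm_unique h1.1 h2.1
  · intro σ _
    exact (measurableSet_eventA σ).inter (hB.preimage (measurable_comp_perm σ))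

lemma card_fiber_eq {n : ℕ} (j : Fin (n + 1)) :
    (Finset.univ.filter fun σ : Equiv.Perm (Fin (n + 1)) =>
      σ.symm (Fin.last n) = j).card = n.factorial := by
  classical
  -- all fibers have the same cardinality
  have hsame : ∀ j k : Fin (n + 1),
      (Finset.univ.filter fun σ : Equiv.Perm (Fin (n + 1)) => σ.symm (Fin.last n) = j).card
      = (Finset.univ.filter fun σ : Equiv.Perm (Fin (n + 1)) => σ.symm (Fin.last n) = k).card := by
    intro j k
    refine Finset.card_bij' (fun σ _ => σ * Equiv.swap j k) (fun σ _ => σ * Equiv.swap j k)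
      ?_ ?_ ?_ ?_
    · intro σ hσ
      simp only [Finset.mem_filter, Finset.mem_univ, true_and] at hσ ⊢
      simp [Equiv.Perm.mul_def, Equiv.symm_trans_apply, hσ]
    · intro σ hσ
      simp only [Finset.mem_filter, Finset.mem_univ, true_and] at hσ ⊢
      simp [Equiv.Perm.mul_def, Equiv.symm_trans_apply, hσ]
    · intro σ _
      simp [mul_assoc]
    · intro σ _
      simp [mul_assoc]
  have hsum : ∑ j : Fin (n + 1),
      (Finset.univ.filter fun σ : Equiv.Perm (Fin (n + 1)) => σ.symm (Fin.last n) = j).card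
      = (n + 1).factorial := by
    have htot : (n + 1).factorial = (Finset.univ : Finset (Equiv.Perm (Fin (n + 1)))).card := by
      simp [Finset.card_univ, Fintype.card_perm]
    rw [htot, Finset.card_eq_sum_card_fiberwise
      (f := fun σ : Equiv.Perm (Fin (n + 1)) => σ.symm (Fin.last n)) (t := Finset.univ)
      (fun σ _ => Finset.mem_univ _)]
  have hconst : ∑ k : Fin (n + 1),
      (Finset.univ.filter fun σ : Equiv.Perm (Fin (n + 1)) => σ.symm (Fin.last n) = k).card
      = (n + 1) * (Finset.univ.filter fun σ : Equiv.Perm (Fin (n + 1)) =>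
          σ.symm (Fin.last n) = j).card := by
    rw [Finset.sum_congr rfl (fun k _ => hsame k j)]
    simp [Finset.sum_const, Finset.card_univ, mul_comm]
  rw [hconst, Nat.factorial_succ n] at hsum
  exact Nat.eq_of_mul_eq_mul_left (Nat.succ_pos n) hsum

lemma card_perm_filter {n : ℕ} (s : Set ℕ) [DecidablePred (· ∈ s)] :
    (Finset.univ.filter fun σ : Equiv.Perm (Fin (n + 1)) =>
        ((σ.symm (Fin.last n) : ℕ) + 1) ∈ s).card
      = (Finset.univ.filter fun j : Fin (n + 1) => ((j : ℕ) + 1) ∈ s).card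
          * n.factorial := by
  classical
  rw [Finset.card_eq_sum_card_fiberwise
    (f := fun σ : Equiv.Perm (Fin (n + 1)) => σ.symm (Fin.last n))
    (t := Finset.univ.filter fun j : Fin (n + 1) => ((j : ℕ) + 1) ∈ s)
    (fun σ hσ => by
      simp only [Finset.mem_coe, Finset.mem_filter, Finset.mem_univ, true_and] at hσ ⊢
      exact hσ)]
  rw [Finset.sum_congr rfl (fun j hj => ?_), Finset.sum_const, smul_eq_mul]
  have hj' : ((j : ℕ) + 1) ∈ s := (Finset.mem_filter.1 hj).2
  rw [← card_fiber_eq j]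
  congr 1
  ext σ
  simp only [Finset.mem_filter, Finset.mem_univ, true_and, and_iff_right_iff_imp]
  intro h
  rw [h]
  exact hj'

end RankAux

/-- **The rank of an exchangeable test point is uniform and independent of the
order statistics.**

Let `S₁, …, S_{n+1}` be i.i.d. with an atomless distribution `μ`, and let
`R = Σᵢ 1{Sᵢ ≤ S_{n+1}}` be the rank of the last point. Then
`R ∼ Unif{1, …, n+1}` and `R` is independent of the order statistics vector
`(S_{(1)}, …, S_{(n+1)})`. -/
theorem rank_uniform_and_indep_of_order_stats
    (n : ℕ) (μ : Measure ℝ) [IsProbabilityMeasure μ]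
    (hatomless : ∀ x : ℝ, μ {x} = 0) :
    (∀ k ∈ Finset.Icc 1 (n + 1),
      (Measure.pi fun _ : Fin (n + 1) => μ)
        {ω : Fin (n + 1) → ℝ |
          (Finset.univ.filter fun i => ω i ≤ ω (Fin.last n)).card = k}
      = ((n : ENNReal) + 1)⁻¹) ∧
    ProbabilityTheory.IndepFun
      (fun ω : Fin (n + 1) → ℝ =>
        (Finset.univ.filter fun i => ω i ≤ ω (Fin.last n)).card)
      (fun ω : Fin (n + 1) → ℝ => fun r : Fin (n + 1) => orderStat (r.1 + 1) ω)
      (Measure.pi fun _ : Fin (n + 1) => μ) := by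
  classical
  set π := Measure.pi fun _ : Fin (n + 1) => μ with hπ
  set R := fun ω : Fin (n + 1) → ℝ =>
    (Finset.univ.filter fun i => ω i ≤ ω (Fin.last n)).card with hR
  set O := fun ω : Fin (n + 1) → ℝ => fun r : Fin (n + 1) => orderStat (r.1 + 1) ω
    with hO
  -- the general formula
  have key : ∀ (s : Set ℕ) (B : Set (Fin (n + 1) → ℝ)), MeasurableSet B →
      π (R ⁻¹' s ∩ O ⁻¹' B)
        = (((Finset.univ.filter fun j : Fin (n + 1) => ((j : ℕ) + 1) ∈ s).card
            * n.factorial : ℕ) : ENNReal) * π (RankAux.eventA 1 ∩ B) := by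
    intro s B hB
    rw [← RankAux.card_perm_filter s]
    refine RankAux.measure_eq_card_mul μ hatomless
      (fun σ : Equiv.Perm (Fin (n + 1)) => ((σ.symm (Fin.last n) : ℕ) + 1) ∈ s) hB _ ?_
    intro ω hω
    constructor
    · rintro ⟨hRs, hOB⟩
      obtain ⟨σ, hσ⟩ := RankAux.exists_perm hω
      refine ⟨σ, ?_, hσ, ?_⟩
      · have := RankAux.rank_eq hσ
        simpa only [Set.mem_preimage, hR, this] using hRs
      · have hOω : O ω = ω ∘ σ := by
          funext r
          exact RankAux.orderStat_eq hσ r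
        rwa [Set.mem_preimage, hOω] at hOB
    · rintro ⟨σ, hPσ, hσ, hBσ⟩
      have hrank := RankAux.rank_eq hσ
      have hOω : O ω = ω ∘ σ := by
        funext r
        exact RankAux.orderStat_eq hσ r
      exact ⟨by simpa only [Set.mem_preimage, hR, hrank] using hPσ,
        by rwa [Set.mem_preimage, hOω]⟩
  -- total mass: the measure of eventA 1
  have hA1 : π (RankAux.eventA (1 : Equiv.Perm (Fin (n + 1))))
      = (((n + 1).factorial : ℕ) : ENNReal)⁻¹ := by
    have h1 := key Set.univ Set.univ MeasurableSet.univ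
    simp only [Set.preimage_univ, Set.inter_univ, Set.univ_inter, Set.mem_univ,
      Finset.filter_true, Finset.card_univ, Fintype.card_fin, measure_univ] at h1
    have hfac : ((n + 1) * n.factorial : ℕ) = (n + 1).factorial :=
      (Nat.factorial_succ n).symm
    rw [hfac] at h1
    exact ENNReal.eq_inv_of_mul_eq_one_left (by rw [mul_comm]; exact h1.symm)
  have hfacne : (((n + 1).factorial : ℕ) : ENNReal) ≠ 0 :=
    Nat.cast_ne_zero.2 (Nat.factorial_ne_zero _)
  have hfacnt : (((n + 1).factorial : ℕ) : ENNReal) ≠ ⊤ := ENNReal.natCast_ne_top _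
  -- marginal of R
  have keyR : ∀ s : Set ℕ, π (R ⁻¹' s)
      = (((Finset.univ.filter fun j : Fin (n + 1) => ((j : ℕ) + 1) ∈ s).card
          * n.factorial : ℕ) : ENNReal) * (((n + 1).factorial : ℕ) : ENNReal)⁻¹ := by
    intro s
    have h1 := key s Set.univ MeasurableSet.univ
    simp only [Set.preimage_univ, Set.inter_univ] at h1
    rw [h1, hA1]
  -- marginal of O
  have keyO : ∀ B : Set (Fin (n + 1) → ℝ), MeasurableSet B →
      π (O ⁻¹' B) = (((n + 1).factorial : ℕ) : ENNReal)
          * π (RankAux.eventA 1 ∩ B) := by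
    intro B hB
    have h1 := key Set.univ B hB
    simp only [Set.preimage_univ, Set.univ_inter, Set.mem_univ,
      Finset.filter_true, Finset.card_univ, Fintype.card_fin] at h1
    have hfac : ((n + 1) * n.factorial : ℕ) = (n + 1).factorial :=
      (Nat.factorial_succ n).symm
    rw [hfac] at h1
    exact h1
  constructor
  · -- uniformity
    intro k hk
    rw [Finset.mem_Icc] at hk
    have hset : {ω : Fin (n + 1) → ℝ |
        (Finset.univ.filter fun i => ω i ≤ ω (Fin.last n)).card = k} = R ⁻¹' {k} := rfl
    rw [hset, keyR {k}]
    have hcard : ∀ inst : DecidablePred (fun j : Fin (n + 1) => ((j : ℕ) + 1) ∈ ({k} : Set ℕ)),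
        (@Finset.filter _ _ inst Finset.univ).card = 1 := by
      intro inst
      rw [Finset.card_eq_one]
      refine ⟨⟨k - 1, by omega⟩, ?_⟩
      ext j
      simp only [Finset.mem_filter, Finset.mem_univ, true_and, Set.mem_singleton_iff,
        Finset.mem_singleton, Fin.ext_iff]
      omega
    rw [hcard _, one_mul]
    -- now: (n! : ENNReal) * ((n+1)!)⁻¹ = ((n : ENNReal) + 1)⁻¹
    have hfac : ((n + 1).factorial : ℕ) = (n + 1) * n.factorial := Nat.factorial_succ n
    rw [hfac]
    push_cast
    rw [ENNReal.mul_inv (Or.inl (Nat.cast_add_one_ne_zero n)) (Or.inr (Nat.cast_ne_zero.2 (Nat.factorial_ne_zero n)))]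
    have hnfne : ((n.factorial : ℕ) : ENNReal) ≠ 0 :=
      Nat.cast_ne_zero.2 (Nat.factorial_ne_zero _)
    have hnfnt : ((n.factorial : ℕ) : ENNReal) ≠ ⊤ := ENNReal.natCast_ne_top _
    rw [mul_comm ((↑(n : ℕ) + 1 : ENNReal))⁻¹ _, ← mul_assoc,
      ENNReal.mul_inv_cancel hnfne hnfnt, one_mul]
  · -- independence
    rw [ProbabilityTheory.indepFun_iff_measure_inter_preimage_eq_mul]
    intro s t _ ht
    rw [key s t ht, keyR s, keyO t ht]
    set a := (((Finset.univ.filter fun j : Fin (n + 1) => ((j : ℕ) + 1) ∈ s).card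
        * n.factorial : ℕ) : ENNReal)
    set b := (((n + 1).factorial : ℕ) : ENNReal)
    set c := π (RankAux.eventA 1 ∩ t)
    calc a * c = a * (b⁻¹ * b) * c := by rw [ENNReal.inv_mul_cancel hfacne hfacnt, mul_one]
      _ = a * b⁻¹ * (b * c) := by ring
end
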